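/- Let d ≥ 1, N ≥ 2, let L_d : (ℝ × ℝ^d) × (ℝ × ℝ^d) → ℝ, written L_d(t, q, t', q'), be differentiable, and let g_d⁺, g_d⁻ : (ℝ × ℝ^d) × (ℝ × ℝ^d) → ℝ be the discrete power terms. Let (t, q) : {0, 1, …, N} → ℝ × ℝ^d satisfy the extended forced discrete energy equation D₃L_d(t_{k−1}, q_{k−1}, t_k, q_k) + D₁L_d(t_k, q_k, t_{k+1}, q_{k+1}) + g_d⁺(t_{k−1}, q_{k−1}, t_k, q_k) + g_d⁻(t_k, q_k, t_{k+1}, q_{k+1}) = 0 for all 1 ≤ k ≤ N−1. Define the modified discrete energy E_k := −D₃L_d(t_{k−1}, q_{k−1}, t_k, q_k) − g_d⁺(t_{k−1}, q_{k−1}, t_k, q_k) for 1 ≤ k ≤ N. Then for all 1 ≤ k ≤ N−1 the discrete energy balance holds: E_{k+1} − E_k = −[D₁L_d + D₃L_d + g_d⁺ + g_d⁻](t_k, q_k, t_{k+1}, q_{k+1}). -/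
import Mathlib

/-- **Discrete energy balance for the extended forced discrete energy equation.**
If the extended discrete path `(t, q)` satisfies the extended forced discrete energy equation
`D₃L_d(t_{k−1}, q_{k−1}, t_k, q_k) + D₁L_d(t_k, q_k, t_{k+1}, q_{k+1})
  + g_d⁺(t_{k−1}, q_{k−1}, t_k, q_k) + g_d⁻(t_k, q_k, t_{k+1}, q_{k+1}) = 0` for
`1 ≤ k ≤ N−1`, and the modified discrete energy is
`E_k = −D₃L_d(t_{k−1}, q_{k−1}, t_k, q_k) − g_d⁺(t_{k−1}, q_{k−1}, t_k, q_k)`, then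
`E_{k+1} − E_k = −[D₁L_d + D₃L_d + g_d⁺ + g_d⁻](t_k, q_k, t_{k+1}, q_{k+1})` for
`1 ≤ k ≤ N−1`. -/
theorem modified_discrete_energy_balance
    (d : ℕ) (hd : 1 ≤ d) (N : ℕ) (hN : 2 ≤ N)
    (Ld : (ℝ × EuclideanSpace ℝ (Fin d)) × (ℝ × EuclideanSpace ℝ (Fin d)) → ℝ)
    (hLd : Differentiable ℝ Ld)
    (gdp gdm : (ℝ × EuclideanSpace ℝ (Fin d)) × (ℝ × EuclideanSpace ℝ (Fin d)) → ℝ)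
    (t : ℕ → ℝ) (q : ℕ → EuclideanSpace ℝ (Fin d))
    (henergy : ∀ k : ℕ, 1 ≤ k → k + 1 ≤ N →
      deriv (fun s => Ld ((t (k - 1), q (k - 1)), (s, q k))) (t k)
        + deriv (fun s => Ld ((s, q k), (t (k + 1), q (k + 1)))) (t k)
        + gdp ((t (k - 1), q (k - 1)), (t k, q k))
        + gdm ((t k, q k), (t (k + 1), q (k + 1))) = 0)
    (E : ℕ → ℝ)
    (hE : ∀ k : ℕ, 1 ≤ k → k ≤ N →
      E k = -deriv (fun s => Ld ((t (k - 1), q (k - 1)), (s, q k))) (t k)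
            - gdp ((t (k - 1), q (k - 1)), (t k, q k))) :
    ∀ k : ℕ, 1 ≤ k → k + 1 ≤ N →
      E (k + 1) - E k
        = -(deriv (fun s => Ld ((s, q k), (t (k + 1), q (k + 1)))) (t k)
            + deriv (fun s => Ld ((t k, q k), (s, q (k + 1)))) (t (k + 1))
            + gdp ((t k, q k), (t (k + 1), q (k + 1)))
            + gdm ((t k, q k), (t (k + 1), q (k + 1)))) := by
  intro k hk hkN
  have h1 := hE k hk (le_trans (Nat.le_succ k) hkN)
  have h2 := hE (k + 1) (Nat.le_succ_of_le hk) hkN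
  have h3 := henergy k hk hkN
  simp only [Nat.add_sub_cancel] at h2
  rw [h1, h2]
  linarith
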